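/- For b > 0 and y > 0, the generalized incomplete gamma function satisfies Γ(0, y; b) = ∫_y^∞ t^{−1}e^{−t − b/t} dt = ∑_{n=0}^∞ ((−b/y)^n/n!)·y⁰·E_{n+1}(y) when y ≥ √b, where E_n(y) = ∫_1^∞ t^{−n}e^{−yt} dt is the generalized exponential integral. -/

import Mathlib

open MeasureTheory Real

/-- Generalized incomplete gamma function `Γ(a, y; b) = ∫_y^∞ t^{a−1} e^{−t − b/t} dt`. -/
noncomputable def genGamma (a y b : ℝ) : ℝ :=
  ∫ t in Set.Ioi y, t ^ (a - 1) * Real.exp (-t - b / t)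

/-- Generalized exponential integral `E_n(y) = ∫_1^∞ t^{−n} e^{−yt} dt`. -/
noncomputable def expInt (n : ℕ) (y : ℝ) : ℝ :=
  ∫ t in Set.Ioi (1 : ℝ), t ^ (-(n : ℝ)) * Real.exp (-y * t)

lemma real_exp_tsum (x : ℝ) : Real.exp x = ∑' n : ℕ, x ^ n / n.factorial := by
  rw [Real.exp_eq_exp_ℝ, NormedSpace.exp_eq_tsum_div]

lemma aux_integrable (y : ℝ) (hy : 0 < y) (n : ℕ) :
    IntegrableOn (fun t : ℝ => t ^ (-(n:ℝ) - 1) * Real.exp (-t)) (Set.Ioi y) := by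
  have hbound : IntegrableOn (fun t : ℝ => y ^ (-(n:ℝ) - 1) * Real.exp (-t)) (Set.Ioi y) := by
    have := ((exp_neg_integrableOn_Ioi y one_pos).const_mul (y ^ (-(n:ℝ) - 1))); simp at this; exact this
  apply MeasureTheory.Integrable.mono hbound
  · apply (ContinuousOn.aestronglyMeasurable ?_ measurableSet_Ioi)
    apply ContinuousOn.mul
    · exact fun t ht =>
        (Real.continuousAt_rpow_const t _ (Or.inl (ne_of_gt (hy.trans ht)))).continuousWithinAt
    · exact (Real.continuous_exp.comp continuous_neg).continuousOn
  · filter_upwards [ae_restrict_mem measurableSet_Ioi] with t ht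
    have ht0 : 0 < t := hy.trans ht
    rw [Real.norm_of_nonneg (by positivity), Real.norm_of_nonneg (by positivity)]
    have hne : -(n:ℝ) - 1 ≤ 0 := by have : (0:ℝ) ≤ (n:ℝ) := n.cast_nonneg; linarith
    exact mul_le_mul_of_nonneg_right (Real.rpow_le_rpow_of_nonpos hy ht.le hne) (Real.exp_nonneg _)

lemma expInt_eq (y : ℝ) (hy : 0 < y) (n : ℕ) :
    expInt (n + 1) y = y ^ n * ∫ t in Set.Ioi y, t ^ (-(n:ℝ) - 1) * Real.exp (-t) := by
  have key := integral_comp_mul_left_Ioi (fun x : ℝ => x ^ (-(n:ℝ) - 1) * Real.exp (-x)) 1 hy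
  simp only [mul_one, smul_eq_mul] at key
  have hL : (∫ x in Set.Ioi (1:ℝ), (y * x) ^ (-(n:ℝ) - 1) * Real.exp (-(y * x)))
      = y ^ (-(n:ℝ) - 1) * expInt (n + 1) y := by
    rw [expInt, ← integral_const_mul]
    apply setIntegral_congr_fun measurableSet_Ioi
    intro x hx
    have hx0 : (0:ℝ) < x := lt_trans one_pos hx
    show (y*x) ^ (-(n:ℝ)-1) * Real.exp (-(y*x))
        = y ^ (-(n:ℝ)-1) * (x ^ (-((n+1:ℕ):ℝ)) * Real.exp (-y*x))
    rw [Real.mul_rpow hy.le hx0.le, neg_mul]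
    have : -(((n:ℕ)+1:ℕ):ℝ) = -(n:ℝ) - 1 := by push_cast; ring
    rw [this]
    ring
  rw [hL] at key
  have hyn : y ^ (-(n:ℝ) - 1) = (y ^ (n + 1 : ℕ))⁻¹ := by
    rw [← Real.rpow_natCast y (n+1), ← Real.rpow_neg hy.le]
    push_cast; ring_nf
  rw [hyn] at key
  have hpow : (y ^ (n + 1 : ℕ)) ≠ 0 := pow_ne_zero _ hy.ne'
  field_simp at key
  rw [pow_succ] at key
  apply mul_right_cancel₀ hy.ne'
  rw [key]; ring

/-- Series expansion of `Γ(0, y; b)` in terms of generalized exponential integrals, valid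
for `y ≥ √b`: `Γ(0, y; b) = ∑_{n=0}^∞ ((−b/y)^n/n!)·y⁰·E_{n+1}(y)`. -/
theorem genGamma_series (b y : ℝ) (hb : 0 < b) (hy : 0 < y) (h : Real.sqrt b ≤ y) :
    genGamma 0 y b =
      ∑' n : ℕ, ((-b / y) ^ n / (n.factorial : ℝ)) * y ^ (0 : ℝ) * expInt (n + 1) y := by
  set F : ℕ → ℝ → ℝ := fun n t => ((-b)^n / n.factorial) * (t ^ (-(n:ℝ) - 1) * Real.exp (-t))
    with hF
  have hInt : ∀ n, Integrable (F n) (volume.restrict (Set.Ioi y)) :=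
    fun n => (aux_integrable y hy n).const_mul _
  -- norm integral bound
  have hbd : ∀ n : ℕ, (∫ t in Set.Ioi y, ‖F n t‖) ≤ (b/y)^n / n.factorial * (Real.exp (-y) / y) := by
    intro n
    have h1 : (∫ t in Set.Ioi y, ‖F n t‖)
        = (b^n / n.factorial) * ∫ t in Set.Ioi y, t ^ (-(n:ℝ) - 1) * Real.exp (-t) := by
      rw [← integral_const_mul]
      apply setIntegral_congr_fun measurableSet_Ioi
      intro t ht
      have ht0 : (0:ℝ) < t := hy.trans ht
      show ‖F n t‖ = b^n / n.factorial * (t ^ (-(n:ℝ) - 1) * Real.exp (-t))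
      have : ‖F n t‖ = |(-b)^n / n.factorial| * (t ^ (-(n:ℝ) - 1) * Real.exp (-t)) := by
        simp only [hF]
        rw [Real.norm_eq_abs, abs_mul, abs_of_nonneg (a := t ^ (-(n:ℝ) - 1) * Real.exp (-t)) (by positivity)]
      rw [this]
      congr 1
      rw [abs_div, abs_pow, abs_neg, abs_of_nonneg hb.le, abs_of_nonneg (by positivity)]
    rw [h1]
    have h2 : (∫ t in Set.Ioi y, t ^ (-(n:ℝ) - 1) * Real.exp (-t))
        ≤ ∫ t in Set.Ioi y, y ^ (-(n:ℝ) - 1) * Real.exp (-t) := by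
      apply setIntegral_mono_on (aux_integrable y hy n) ?_ measurableSet_Ioi
      · intro t ht
        have hne : -(n:ℝ) - 1 ≤ 0 := by have : (0:ℝ) ≤ (n:ℝ) := n.cast_nonneg; linarith
        exact mul_le_mul_of_nonneg_right (Real.rpow_le_rpow_of_nonpos hy ht.le hne)
          (Real.exp_nonneg _)
      · have := ((exp_neg_integrableOn_Ioi y one_pos).const_mul (y ^ (-(n:ℝ) - 1))); simp at this; exact this
    have h3 : (∫ t in Set.Ioi y, y ^ (-(n:ℝ) - 1) * Real.exp (-t)) = y ^ (-(n:ℝ) - 1) * Real.exp (-y) := by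
      rw [integral_const_mul, integral_exp_neg_Ioi]
    have h4 : b^n / n.factorial * (y ^ (-(n:ℝ) - 1) * Real.exp (-y))
        = (b/y)^n / n.factorial * (Real.exp (-y) / y) := by
      have hyn : y ^ (-(n:ℝ) - 1) = (y ^ (n:ℕ))⁻¹ * y⁻¹ := by
        rw [← Real.rpow_natCast y n, ← Real.rpow_neg hy.le, ← Real.rpow_neg_one y,
          ← Real.rpow_add hy]
        ring_nf
      rw [hyn, div_pow]
      field_simp
    calc b^n / n.factorial * ∫ t in Set.Ioi y, t ^ (-(n:ℝ) - 1) * Real.exp (-t)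
        ≤ b^n / n.factorial * ∫ t in Set.Ioi y, y ^ (-(n:ℝ) - 1) * Real.exp (-t) := by
          apply mul_le_mul_of_nonneg_left h2 (by positivity)
      _ = (b/y)^n / n.factorial * (Real.exp (-y) / y) := by rw [h3, h4]
  have hSum : Summable (fun n => ∫ t in Set.Ioi y, ‖F n t‖) := by
    apply Summable.of_nonneg_of_le (fun n => integral_nonneg (fun t => norm_nonneg _)) hbd
    exact (Real.summable_pow_div_factorial (b/y)).mul_right _
  have key := (MeasureTheory.hasSum_integral_of_summable_integral_norm hInt hSum).tsum_eq
  -- pointwise sum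
  have hpt : ∀ t ∈ Set.Ioi y, (∑' n, F n t) = t ^ ((0:ℝ) - 1) * Real.exp (-t - b / t) := by
    intro t ht
    have ht0 : (0:ℝ) < t := hy.trans ht
    have hFn : ∀ n : ℕ, F n t = (-(b/t))^n / n.factorial * (t ^ (-(1:ℝ)) * Real.exp (-t)) := by
      intro n
      simp only [hF]
      have h5 : t ^ (-(n:ℝ) - 1) = (t ^ (n + 1 : ℕ))⁻¹ := by
        rw [← Real.rpow_natCast t (n+1), ← Real.rpow_neg ht0.le]
        push_cast; ring_nf
      have h7 : t ^ (-(1:ℝ)) = t⁻¹ := Real.rpow_neg_one t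
      have h6 : (-(b/t))^n = (-b)^n / t^n := by
        rw [← neg_div, div_pow]
      show (-b) ^ n / n.factorial * (t ^ (-(n:ℝ) - 1) * Real.exp (-t))
          = (-(b/t))^n / n.factorial * (t ^ (-(1:ℝ)) * Real.exp (-t))
      rw [h5, h7, h6, pow_succ, mul_inv]
      ring
    calc (∑' n, F n t) = (∑' n : ℕ, (-(b/t))^n / n.factorial) * (t ^ (-(1:ℝ)) * Real.exp (-t)) := by
          rw [← tsum_mul_right]; exact tsum_congr hFn
      _ = Real.exp (-(b/t)) * (t ^ (-(1:ℝ)) * Real.exp (-t)) := by rw [← real_exp_tsum]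
      _ = t ^ ((0:ℝ) - 1) * Real.exp (-t - b / t) := by
          rw [show (0:ℝ) - 1 = -1 by ring, show -t - b/t = -t + -(b/t) by ring, Real.exp_add]
          ring
  have hmain : genGamma 0 y b = ∫ t in Set.Ioi y, ∑' n, F n t := by
    rw [genGamma]
    exact (setIntegral_congr_fun measurableSet_Ioi hpt).symm
  rw [hmain, ← key]
  apply tsum_congr
  intro n
  rw [expInt_eq y hy n, Real.rpow_zero, mul_one, div_pow]
  have hyn : (y:ℝ)^n ≠ 0 := pow_ne_zero _ hy.ne'
  have hfac : (n.factorial : ℝ) ≠ 0 := Nat.cast_ne_zero.mpr n.factorial_ne_zero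
  have hs : (-b)^n / y^n / n.factorial * (y^n * ∫ t in Set.Ioi y, t ^ (-(n:ℝ) - 1) * Real.exp (-t))
      = ((-b)^n / n.factorial) * ∫ t in Set.Ioi y, t ^ (-(n:ℝ) - 1) * Real.exp (-t) := by
    field_simp
  rw [hs]
  simp only [hF]
  rw [integral_const_mul]
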